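/- Let n ≥ 1 and let P be the path graph with vertex set {v_0, v_1, …, v_n} and edges v_i v_{i+1} for 0 ≤ i < n. Fix any j ∈ ℤ. Then the number of pairs (A, g) with A ⊆ {v_0, …, v_n}, v_0 ∉ A, g : A ∪ {v_0} → ℤ, g(v_0) = j, such that (A, g restricted to A) is a partial bucket function on P and there exists a bucket extension f̄ of g restricted to A with f̄(v_0) = j, is at most 3 · 4.383^{n−1}. -/

import Mathlib

/-- `fbar : V → ℤ` is a bucket extension of `f` (given on `A`). -/
def IsBucketExtension {V : Type*} (G : SimpleGraph V) (A : Set V) (f fbar : V → ℤ) : Prop :=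
  (∀ v ∈ A, fbar v = f v) ∧
  (∀ u v, G.Adj u v → |fbar u - fbar v| ≤ 1) ∧
  (∀ u v, G.Adj u v → u ∈ A → v ∉ A → fbar v ≤ fbar u)

/-- Prototypes `(A, g)` w.r.t. `B = {v_0}` on the path `v_0 v_1 ⋯ v_n` with `v_0 ∉ A` and
`g(v_0) = j`: pairs with `g : A ∪ {v_0} → ℤ` (encoded by `g` vanishing outside `A ∪ {v_0}`)
such that `(A, g|_A)` is a partial bucket function with a bucket extension `f̄` satisfying
`f̄(v_0) = j`. -/
def pathProtos (n : ℕ) (j : ℤ) : Set (Finset (Fin (n + 1)) × (Fin (n + 1) → ℤ)) :=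
  {p | (∀ v ∉ insert (0 : Fin (n + 1)) p.1, p.2 v = 0) ∧ (0 : Fin (n + 1)) ∉ p.1 ∧
       p.2 0 = j ∧
       ∃ fbar, IsBucketExtension (SimpleGraph.pathGraph (n + 1)) ↑p.1 p.2 fbar ∧
         fbar 0 = j}

namespace PathProtoAux

/-! ### The counting automaton -/

abbrev Sym := Bool × Fin 3

def startOK (t : Sym) : Bool := !(t.1 && (t.2 == 0))
def endOK (t : Sym) : Bool := t.1 || (t.2 == 0)
def trans (s t : Sym) : Bool :=
  !(s.1 && !t.1 && (t.2 == 2)) && !(!s.1 && t.1 && (t.2 == 0)) &&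
  (!(!s.1 && (s.2 != 0)) || (t.2 == 2))

lemma startOK_iff (t : Sym) : startOK t = true ↔ (t.1 = true → t.2 ≠ 0) := by
  revert t; decide

lemma endOK_iff (t : Sym) : endOK t = true ↔ (t.1 = false → t.2 = 0) := by
  revert t; decide

lemma trans_iff (s t : Sym) : trans s t = true ↔
    (¬(s.1 = true ∧ t.1 = false ∧ t.2 = 2) ∧ ¬(s.1 = false ∧ t.1 = true ∧ t.2 = 0) ∧
      (s.1 = false → s.2 ≠ 0 → t.2 = 2)) := by
  revert s t; decide

def w : Sym → ℕ := fun s => if s.1 then 16 else if s.2 = 0 then 13 else 5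
def e : Sym → ℕ := fun s => ∑ t : Sym, if trans s t && endOK t then 1 else 0

def cnt : ℕ → Sym → ℕ
  | 0, t => if startOK t then 1 else 0
  | m+1, t => ∑ s : Sym, if trans s t then cnt m s else 0

def totalCnt (m : ℕ) : ℕ := ∑ t : Sym, if endOK t then cnt m t else 0

def F : ℕ → Sym → Finset (List Sym)
  | 0, t => if startOK t then {[t]} else ∅
  | m+1, t => Finset.univ.biUnion fun s =>
      if trans s t then (F m s).image (List.cons t) else ∅

lemma card_F_le_cnt : ∀ m t, (F m t).card ≤ cnt m t := by
  intro m
  induction m with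
  | zero => intro t; by_cases h : startOK t <;> simp [F, cnt, h]
  | succ m ih =>
    intro t
    refine le_trans (Finset.card_biUnion_le) ?_
    refine Finset.sum_le_sum fun s _ => ?_
    by_cases h : trans s t
    · simp only [h, if_true]
      exact le_trans Finset.card_image_le (ih s)
    · simp [h]

lemma D1 : (∑ s : Sym, cnt 0 s * w s) = 55 := by decide
lemma D2 : ∀ s : Sym, (∑ t : Sym, if trans s t then w t else 0) * 1000 ≤ 4383 * w s := by decide
lemma D4 : ∀ s : Sym, (∑ t : Sym, if trans s t then e t else 0) ≤ w s := by decide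
lemma D3a : totalCnt 0 = 3 := by decide
lemma D3b : totalCnt 1 = 13 := by decide

/-- generic exchange identity -/
lemma exch {R : Type*} [CommSemiring R] (c : Sym → R) (v : Sym → R) :
    (∑ t : Sym, (∑ s : Sym, if trans s t then c s else 0) * v t)
      = ∑ s : Sym, c s * (∑ t : Sym, if trans s t then v t else 0) := by
  have h1 : ∀ t : Sym, (∑ s : Sym, if trans s t then c s else 0) * v t
      = ∑ s : Sym, if trans s t then c s * v t else 0 := by
    intro t; rw [Finset.sum_mul]
    exact Finset.sum_congr rfl fun s _ => by by_cases h : trans s t <;> simp [h]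
  rw [Finset.sum_congr rfl fun t _ => h1 t, Finset.sum_comm]
  refine Finset.sum_congr rfl fun s _ => ?_
  rw [Finset.mul_sum]
  exact Finset.sum_congr rfl fun t _ => by by_cases h : trans s t <;> simp [h]

lemma keyA : ∀ m, (∑ s : Sym, (cnt m s : ℝ) * w s) ≤ 55 * 4.383 ^ m := by
  intro m
  induction m with
  | zero =>
    have : (∑ s : Sym, (cnt 0 s : ℝ) * w s) = ((∑ s : Sym, cnt 0 s * w s : ℕ) : ℝ) := by
      push_cast; rfl
    rw [this, D1]; norm_num
  | succ m ih =>
    have step : (∑ t : Sym, (cnt (m+1) t : ℝ) * w t)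
        = ∑ s : Sym, (cnt m s : ℝ) * (∑ t : Sym, if trans s t then (w t : ℝ) else 0) := by
      simp only [cnt]
      push_cast
      exact exch _ _
    rw [step]
    have hle : ∀ s : Sym, (∑ t : Sym, if trans s t then (w t : ℝ) else 0) ≤ 4.383 * w s := by
      intro s
      have hc : ((∑ t : Sym, if trans s t then w t else 0 : ℕ) : ℝ) * 1000 ≤ 4383 * w s := by
        exact_mod_cast D2 s
      have hs : ((∑ t : Sym, if trans s t then w t else 0 : ℕ) : ℝ)
          = ∑ t : Sym, if trans s t then (w t : ℝ) else 0 := by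
        push_cast; rfl
      rw [hs] at hc; nlinarith
    calc (∑ s : Sym, (cnt m s : ℝ) * (∑ t : Sym, if trans s t then (w t : ℝ) else 0))
        ≤ ∑ s : Sym, (cnt m s : ℝ) * (4.383 * w s) := by
          refine Finset.sum_le_sum fun s _ => ?_
          exact mul_le_mul_of_nonneg_left (hle s) (by positivity)
      _ = 4.383 * ∑ s : Sym, (cnt m s : ℝ) * w s := by
          rw [Finset.mul_sum]; exact Finset.sum_congr rfl fun s _ => by ring
      _ ≤ 4.383 * (55 * 4.383 ^ m) := by nlinarith
      _ = 55 * 4.383 ^ (m+1) := by ring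

lemma total_succ (m : ℕ) : totalCnt (m+1) = ∑ s : Sym, cnt m s * e s := by
  unfold totalCnt
  simp only [cnt]
  have h1 : ∀ t : Sym, (if endOK t then (∑ s : Sym, if trans s t then cnt m s else 0) else 0)
      = ∑ s : Sym, if trans s t && endOK t then cnt m s else 0 := by
    intro t
    by_cases h : endOK t
    · simp [h]
    · simp [h]
  rw [Finset.sum_congr rfl fun t _ => h1 t, Finset.sum_comm]
  refine Finset.sum_congr rfl fun s _ => ?_
  unfold e
  rw [Finset.mul_sum]
  refine Finset.sum_congr rfl fun t _ => ?_
  by_cases h : trans s t && endOK t <;> simp [h]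

lemma keyB (m : ℕ) : totalCnt (m+2) ≤ ∑ s : Sym, cnt m s * w s := by
  rw [total_succ]
  have h1 : (∑ s : Sym, cnt (m+1) s * e s)
      = ∑ σ : Sym, cnt m σ * (∑ s : Sym, if trans σ s then e s else 0) := by
    simp only [cnt]; exact exch _ _
  rw [h1]
  exact Finset.sum_le_sum fun σ _ => Nat.mul_le_mul_left _ (D4 σ)

lemma totalBound (n : ℕ) (hn : 1 ≤ n) : (totalCnt (n-1) : ℝ) ≤ 3 * 4.383 ^ (n-1) := by
  rcases n with _ | _ | _ | m
  · omega
  · simp [D3a]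
  · rw [(by rfl : 2 - 1 = 1), D3b]; norm_num
  · have h2 : (m + 3) - 1 = m + 2 := by omega
    rw [h2]
    have hc : (totalCnt (m+2) : ℝ) ≤ ∑ s : Sym, (cnt m s : ℝ) * w s := by
      calc (totalCnt (m+2) : ℝ) ≤ ((∑ s : Sym, cnt m s * w s : ℕ) : ℝ) := by exact_mod_cast keyB m
        _ = ∑ s : Sym, (cnt m s : ℝ) * w s := by push_cast; rfl
    have hpow : (0:ℝ) < 4.383 ^ m := by positivity
    calc (totalCnt (m+2) : ℝ) ≤ 55 * 4.383 ^ m := le_trans hc (keyA m)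
      _ ≤ 3 * 4.383 ^ (m+2) := by
          have h3 : (3:ℝ) * 4.383 ^ (m+2) = (3 * 4.383^2) * 4.383 ^ m := by ring
          rw [h3]; nlinarith

/-! ### membership of valid words -/

lemma mem_F (φ : ℕ → Sym) : ∀ m : ℕ, startOK (φ 0) = true →
    (∀ i, i + 1 ≤ m → trans (φ i) (φ (i+1)) = true) →
    ((List.range (m+1)).reverse.map φ) ∈ F m (φ m) := by
  intro m
  induction m with
  | zero =>
    intro h0 _
    simp [F, h0, List.range_succ]
  | succ m ih =>
    intro h0 ht
    have hrev : (List.range (m+2)).reverse.map φ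
        = φ (m+1) :: ((List.range (m+1)).reverse.map φ) := by
      rw [List.range_succ (n := m+1)]
      simp
    rw [hrev]
    show _ ∈ F (m+2-1) (φ (m+1))
    simp only [show m+2-1 = m+1 from rfl, F]
    refine Finset.mem_biUnion.mpr ⟨φ m, Finset.mem_univ _, ?_⟩
    rw [if_pos (ht m le_rfl)]
    exact Finset.mem_image_of_mem _ (ih h0 fun i hi => ht i (by omega))

/-! ### the canonical minimal extension -/

variable {n : ℕ} {j : ℤ}

abbrev PP (n : ℕ) := Finset (Fin (n + 1)) × (Fin (n + 1) → ℤ)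

noncomputable def fmin (p : PP n) : Fin (n+1) → ℤ :=
  fun v => (insert (0 : Fin (n+1)) p.1).sup' (Finset.insert_nonempty _ _)
    (fun a => p.2 a - |(v.val : ℤ) - (a.val : ℤ)|)

def vtx (n i : ℕ) : Fin (n+1) := ⟨min i n, by omega⟩

lemma vtx_val {i : ℕ} (h : i ≤ n) : (vtx n i).val = i := by
  simp [vtx, Nat.min_eq_left h]

lemma adj_of_val {u v : Fin (n+1)} (h : u.val + 1 = v.val) :
    (SimpleGraph.pathGraph (n+1)).Adj u v :=
  SimpleGraph.pathGraph_adj.mpr (Or.inl h)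

section WithFbar

variable {p : PP n} {fbar : Fin (n+1) → ℤ}

lemma fbar_lip (hlip : ∀ u v, (SimpleGraph.pathGraph (n+1)).Adj u v → |fbar u - fbar v| ≤ 1)
    (a b : Fin (n+1)) : |fbar a - fbar b| ≤ |(a.val : ℤ) - (b.val : ℤ)| := by
  have key : ∀ d : ℕ, ∀ a b : Fin (n+1), a.val + d = b.val → |fbar b - fbar a| ≤ (d : ℤ) := by
    intro d
    induction d with
    | zero =>
      intro a b h
      have : a = b := Fin.ext (by omega)
      subst this; simp
    | succ d ih =>
      intro a b h
      have hc : a.val + d < n + 1 := by omega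
      set c : Fin (n+1) := ⟨a.val + d, hc⟩ with hcdef
      have h1 : |fbar c - fbar a| ≤ (d : ℤ) := ih a c rfl
      have h2 : |fbar b - fbar c| ≤ 1 := by
        rw [abs_sub_comm]; exact hlip c b (adj_of_val (by simp [hcdef]; omega))
      calc |fbar b - fbar a| ≤ |fbar b - fbar c| + |fbar c - fbar a| := abs_sub_le _ _ _
        _ ≤ 1 + d := by linarith
        _ = ((d + 1 : ℕ) : ℤ) := by push_cast; ring
  rw [abs_sub_comm]
  rcases le_total a.val b.val with hab | hab
  · have h1 := key (b.val - a.val) a b (by omega)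
    have h2 : ((b.val - a.val : ℕ) : ℤ) ≤ |(a.val : ℤ) - (b.val : ℤ)| := by
      rw [abs_sub_comm, abs_of_nonneg (by push_cast; omega : (0:ℤ) ≤ (b.val : ℤ) - a.val)]
      push_cast; omega
    linarith
  · have h1 := key (a.val - b.val) b a (by omega)
    rw [abs_sub_comm (fbar b)]
    have h2 : ((a.val - b.val : ℕ) : ℤ) ≤ |(a.val : ℤ) - (b.val : ℤ)| := by
      rw [abs_of_nonneg (by push_cast; omega : (0:ℤ) ≤ (a.val : ℤ) - b.val)]
      push_cast; omega
    linarith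

end WithFbar

variable {p : PP n}

lemma fmin_agree (hp : p ∈ pathProtos n j) :
    ∀ a ∈ insert (0 : Fin (n+1)) p.1, fmin p a = p.2 a := by
  obtain ⟨hzero, h0A, hj, fbar, ⟨hag, hlip, hdes⟩, hf0⟩ := hp
  have hagS : ∀ a ∈ insert (0 : Fin (n+1)) p.1, fbar a = p.2 a := by
    intro a ha
    rcases Finset.mem_insert.mp ha with h | h
    · subst h; rw [hf0, hj]
    · exact hag a (by simpa using h)
  intro a ha
  apply le_antisymm
  · apply Finset.sup'_le
    intro b hb
    have h2 : p.2 b - p.2 a ≤ |(b.val : ℤ) - a.val| := by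
      calc p.2 b - p.2 a ≤ |p.2 b - p.2 a| := le_abs_self _
        _ ≤ |(b.val : ℤ) - a.val| := by rw [← hagS b hb, ← hagS a ha]; exact fbar_lip hlip b a
    rw [abs_sub_comm] at h2
    linarith
  · have h1 : p.2 a - |(a.val : ℤ) - (a.val : ℤ)| ≤ fmin p a :=
      Finset.le_sup' (fun b : Fin (n+1) => p.2 b - |(a.val : ℤ) - (b.val : ℤ)|) ha
    simp only [sub_self, abs_zero, sub_zero] at h1
    exact h1

lemma fmin_zero (hp : p ∈ pathProtos n j) : fmin p 0 = j := by
  rw [fmin_agree hp 0 (Finset.mem_insert_self _ _), hp.2.2.1]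

lemma fmin_lip (u v : Fin (n+1)) (hd : |(u.val : ℤ) - (v.val : ℤ)| = 1) :
    fmin p u ≤ fmin p v + 1 := by
  apply Finset.sup'_le
  intro a ha
  have h1 : p.2 a - |(v.val : ℤ) - (a.val : ℤ)| ≤ fmin p v :=
    Finset.le_sup' (fun b : Fin (n+1) => p.2 b - |(v.val : ℤ) - (b.val : ℤ)|) ha
  have h2 : |(u.val : ℤ) - (a.val : ℤ)| ≥ |(v.val : ℤ) - (a.val : ℤ)| - 1 := by
    have := abs_sub_abs_le_abs_sub ((v.val : ℤ) - a.val) ((u.val : ℤ) - a.val)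
    have h3 : |(v.val : ℤ) - a.val - ((u.val : ℤ) - a.val)| = 1 := by
      rw [show (v.val : ℤ) - a.val - ((u.val : ℤ) - a.val) = -((u.val:ℤ) - v.val) by ring,
        abs_neg, hd]
    linarith
  linarith

lemma fmin_desc (hp : p ∈ pathProtos n j) (u v : Fin (n+1)) (hu : u ∈ p.1) (hv : v ∉ p.1)
    (hd : |(u.val : ℤ) - (v.val : ℤ)| = 1) : fmin p v ≤ fmin p u := by
  obtain ⟨hzero, h0A, hj, fbar, ⟨hag, hlip, hdes⟩, hf0⟩ := hp
  have hagS : ∀ a ∈ insert (0 : Fin (n+1)) p.1, fbar a = p.2 a := by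
    intro a ha
    rcases Finset.mem_insert.mp ha with h | h
    · subst h; rw [hf0, hj]
    · exact hag a (by simpa using h)
  have hadj : (SimpleGraph.pathGraph (n+1)).Adj u v := by
    rcases (abs_eq (by norm_num : (0:ℤ) ≤ 1)).mp hd with h | h
    · exact (adj_of_val (by omega)).symm
    · exact adj_of_val (by omega)
  have hdesc : fbar v ≤ fbar u := hdes u v hadj (by simpa using hu) (by simpa using hv)
  have hfu : fmin p u = p.2 u := fmin_agree ⟨hzero, h0A, hj, fbar, ⟨hag, hlip, hdes⟩, hf0⟩ u
    (Finset.mem_insert_of_mem hu)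
  rw [hfu]
  apply Finset.sup'_le
  intro a ha
  have h1 : fbar a - fbar v ≤ |(a.val : ℤ) - v.val| := by
    calc fbar a - fbar v ≤ |fbar a - fbar v| := le_abs_self _
      _ ≤ |(a.val : ℤ) - v.val| := fbar_lip hlip a v
  rw [hagS a ha] at h1
  have h2 : fbar u = p.2 u := hagS u (Finset.mem_insert_of_mem hu)
  rw [abs_sub_comm] at h1
  linarith

lemma fmin_min (hp : p ∈ pathProtos n j) (v : Fin (n+1)) (hv : v ∉ insert (0 : Fin (n+1)) p.1) :
    (∃ u : Fin (n+1), u.val + 1 = v.val ∧ fmin p v ≤ fmin p u - 1) ∨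
    (∃ u : Fin (n+1), v.val + 1 = u.val ∧ fmin p v ≤ fmin p u - 1) := by
  obtain ⟨a, ha, hav⟩ := Finset.exists_mem_eq_sup' (Finset.insert_nonempty (0 : Fin (n+1)) p.1)
    (fun a : Fin (n+1) => p.2 a - |(v.val : ℤ) - (a.val : ℤ)|)
  have hane : a ≠ v := fun h => hv (h ▸ ha)
  rcases lt_or_gt_of_ne (fun h : a.val = v.val => hane (Fin.ext h)) with hlt | hgt
  · left
    have hv1 : v.val - 1 < n + 1 := by omega
    refine ⟨⟨v.val - 1, hv1⟩, by simp; omega, ?_⟩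
    have h1 : p.2 a - |((v.val - 1 : ℕ) : ℤ) - (a.val : ℤ)| ≤ fmin p ⟨v.val - 1, hv1⟩ :=
      Finset.le_sup' (fun b : Fin (n+1) =>
        p.2 b - |(((⟨v.val-1,hv1⟩ : Fin (n+1)).val : ℕ) : ℤ) - (b.val : ℤ)|) ha
    have habs : |(v.val : ℤ) - (a.val : ℤ)| = |((v.val - 1 : ℕ) : ℤ) - (a.val : ℤ)| + 1 := by
      rw [abs_of_nonneg (by push_cast; omega : (0:ℤ) ≤ (v.val : ℤ) - a.val),
        abs_of_nonneg (by push_cast; omega : (0:ℤ) ≤ ((v.val - 1 : ℕ) : ℤ) - a.val)]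
      push_cast; omega
    have hav' : fmin p v = p.2 a - |(v.val : ℤ) - (a.val : ℤ)| := hav
    rw [hav', habs]
    linarith
  · right
    have hv1 : v.val + 1 < n + 1 := by omega
    refine ⟨⟨v.val + 1, hv1⟩, by simp, ?_⟩
    have h1 : p.2 a - |((v.val + 1 : ℕ) : ℤ) - (a.val : ℤ)| ≤ fmin p ⟨v.val + 1, hv1⟩ :=
      Finset.le_sup' (fun b : Fin (n+1) =>
        p.2 b - |(((⟨v.val+1,hv1⟩ : Fin (n+1)).val : ℕ) : ℤ) - (b.val : ℤ)|) ha
    have habs : |(v.val : ℤ) - (a.val : ℤ)| = |((v.val + 1 : ℕ) : ℤ) - (a.val : ℤ)| + 1 := by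
      rw [abs_of_nonpos (by push_cast; omega : (v.val : ℤ) - a.val ≤ 0),
        abs_of_nonpos (by push_cast; omega : ((v.val + 1 : ℕ) : ℤ) - a.val ≤ 0)]
      push_cast; omega
    have hav' : fmin p v = p.2 a - |(v.val : ℤ) - (a.val : ℤ)| := hav
    rw [hav', habs]
    linarith

/-! ### the encoding -/

def stepSym (s : ℤ) : Fin 3 := if s ≤ -1 then 0 else if s = 0 then 1 else 2

lemma stepSym_zero_iff {s : ℤ} : stepSym s = 0 ↔ s ≤ -1 := by
  unfold stepSym
  split_ifs with h1 h2
  · simpa using h1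
  · constructor
    · intro h; exact absurd h (by decide)
    · intro h; omega
  · constructor
    · intro h; exact absurd h (by decide)
    · intro h; omega

lemma stepSym_two_iff {s : ℤ} : stepSym s = 2 ↔ 1 ≤ s := by
  unfold stepSym
  split_ifs with h1 h2
  · constructor
    · intro h; exact absurd h (by decide)
    · intro h; omega
  · constructor
    · intro h; exact absurd h (by decide)
    · intro h; omega
  · simp only [Fin.isValue, true_iff]; omega

lemma stepSym_inj {s s' : ℤ} (h : |s| ≤ 1) (h' : |s'| ≤ 1) (he : stepSym s = stepSym s') :
    s = s' := by
  rw [abs_le] at h h'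
  have hs : s = -1 ∨ s = 0 ∨ s = 1 := by omega
  have hs' : s' = -1 ∨ s' = 0 ∨ s' = 1 := by omega
  rcases hs with rfl | rfl | rfl <;> rcases hs' with rfl | rfl | rfl <;>
    first | rfl | (exact absurd he (by decide))

noncomputable def ψ (p : PP n) (i : ℕ) : Sym :=
  (decide (vtx n (i+1) ∈ p.1), stepSym (fmin p (vtx n (i+1)) - fmin p (vtx n i)))

noncomputable def Φ (p : PP n) : List Sym := (List.range n).reverse.map (ψ p)

lemma step_abs (i : ℕ) (hi : i < n) :
    |fmin p (vtx n (i+1)) - fmin p (vtx n i)| ≤ 1 := by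
  have hd : |((vtx n (i+1)).val : ℤ) - ((vtx n i).val : ℤ)| = 1 := by
    rw [vtx_val (by omega), vtx_val (by omega)]
    push_cast; rw [show ((i:ℤ)+1) - i = 1 by ring]; simp
  have h1 := fmin_lip (p := p) (vtx n (i+1)) (vtx n i) hd
  have h2 := fmin_lip (p := p) (vtx n i) (vtx n (i+1)) (by rw [abs_sub_comm] at hd; exact hd)
  rw [abs_le]; constructor <;> linarith

lemma vtx_not_mem_S (hp : p ∈ pathProtos n j) {i : ℕ} (hi1 : 1 ≤ i) (hin : i ≤ n)
    (hA : vtx n i ∉ p.1) : vtx n i ∉ insert (0 : Fin (n+1)) p.1 := by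
  intro h
  rcases Finset.mem_insert.mp h with h | h
  · have := congrArg Fin.val h
    rw [vtx_val hin] at this
    simp at this; omega
  · exact hA h

lemma dist_one {a b : ℕ} (ha : a ≤ n) (hb : b ≤ n) (h : a + 1 = b) :
    |((vtx n b).val : ℤ) - ((vtx n a).val : ℤ)| = 1 := by
  rw [vtx_val ha, vtx_val hb]
  have : ((b:ℤ)) - a = 1 := by push_cast; omega
  rw [this]; simp

lemma hstart (hp : p ∈ pathProtos n j) (hn : 1 ≤ n) : startOK (ψ p 0) = true := by
  rw [startOK_iff]
  intro h1 h2
  have hmem : vtx n 1 ∈ p.1 := of_decide_eq_true h1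
  have h0 : vtx n 0 = (0 : Fin (n+1)) := Fin.ext (by rw [vtx_val (by omega)]; simp)
  have hdesc : fmin p (vtx n 0) ≤ fmin p (vtx n 1) := by
    apply fmin_desc hp (vtx n 1) (vtx n 0) hmem (by rw [h0]; exact hp.2.1)
    exact dist_one (by omega) hn rfl
  have h2' : stepSym (fmin p (vtx n 1) - fmin p (vtx n 0)) = 0 := h2
  have := stepSym_zero_iff.mp h2'
  omega

lemma htrans (hp : p ∈ pathProtos n j) : ∀ i, i + 2 ≤ n →
    trans (ψ p i) (ψ p (i+1)) = true := by
  intro i hin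
  rw [trans_iff]
  have hd2 : |((vtx n (i+2)).val : ℤ) - ((vtx n (i+1)).val : ℤ)| = 1 :=
    dist_one (by omega) (by omega) rfl
  refine ⟨?_, ?_, ?_⟩
  · rintro ⟨h1, h2, h3⟩
    have hmu : vtx n (i+1) ∈ p.1 := of_decide_eq_true h1
    have hmv : vtx n (i+2) ∉ p.1 := of_decide_eq_false h2
    have hdesc : fmin p (vtx n (i+2)) ≤ fmin p (vtx n (i+1)) :=
      fmin_desc hp (vtx n (i+1)) (vtx n (i+2)) hmu hmv (by rw [abs_sub_comm]; exact hd2)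
    have h3' : stepSym (fmin p (vtx n (i+2)) - fmin p (vtx n (i+1))) = 2 := h3
    have := stepSym_two_iff.mp h3'
    omega
  · rintro ⟨h1, h2, h3⟩
    have hmu : vtx n (i+1) ∉ p.1 := of_decide_eq_false h1
    have hmv : vtx n (i+2) ∈ p.1 := of_decide_eq_true h2
    have hdesc : fmin p (vtx n (i+1)) ≤ fmin p (vtx n (i+2)) :=
      fmin_desc hp (vtx n (i+2)) (vtx n (i+1)) hmv hmu hd2
    have h3' : stepSym (fmin p (vtx n (i+2)) - fmin p (vtx n (i+1))) = 0 := h3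
    have := stepSym_zero_iff.mp h3'
    omega
  · intro h1 h2
    have hmu : vtx n (i+1) ∉ p.1 := of_decide_eq_false h1
    have hS : vtx n (i+1) ∉ insert (0 : Fin (n+1)) p.1 :=
      vtx_not_mem_S hp (by omega) (by omega) hmu
    have h2' : stepSym (fmin p (vtx n (i+1)) - fmin p (vtx n i)) ≠ 0 := h2
    show stepSym (fmin p (vtx n (i+2)) - fmin p (vtx n (i+1))) = 2
    rcases fmin_min hp (vtx n (i+1)) hS with ⟨z, hz1, hz2⟩ | ⟨z, hz1, hz2⟩
    · exfalso
      rw [vtx_val (by omega : i + 1 ≤ n)] at hz1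
      have hzu : z = vtx n i := Fin.ext (by rw [vtx_val (by omega : i ≤ n)]; omega)
      rw [hzu] at hz2
      exact h2' (stepSym_zero_iff.mpr (by omega))
    · rw [vtx_val (by omega : i + 1 ≤ n)] at hz1
      have hzv : z = vtx n (i+2) := Fin.ext (by rw [vtx_val (by omega : i + 2 ≤ n)]; omega)
      rw [hzv] at hz2
      exact stepSym_two_iff.mpr (by omega)

lemma hend (hp : p ∈ pathProtos n j) (hn : 1 ≤ n) : endOK (ψ p (n-1)) = true := by
  rw [endOK_iff]
  intro h1
  have hvval : (vtx n (n-1+1)).val = n := by rw [vtx_val (by omega)]; omega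
  have hmv : vtx n (n-1+1) ∉ p.1 := of_decide_eq_false h1
  have hS : vtx n (n-1+1) ∉ insert (0 : Fin (n+1)) p.1 := by
    intro h
    rcases Finset.mem_insert.mp h with h | h
    · have := congrArg Fin.val h
      rw [hvval] at this; simp at this; omega
    · exact hmv h
  show stepSym (fmin p (vtx n (n-1+1)) - fmin p (vtx n (n-1))) = 0
  rcases fmin_min hp (vtx n (n-1+1)) hS with ⟨z, hz1, hz2⟩ | ⟨z, hz1, hz2⟩
  · rw [hvval] at hz1
    have hzu : z = vtx n (n-1) := Fin.ext (by rw [vtx_val (by omega : n - 1 ≤ n)]; omega)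
    rw [hzu] at hz2
    exact stepSym_zero_iff.mpr (by omega)
  · exfalso
    have := z.isLt
    rw [hvval] at hz1
    omega

lemma fmin_all_eq {q : PP n} (hp : p ∈ pathProtos n j) (hq : q ∈ pathProtos n j)
    (hps : ∀ i, i < n → ψ p i = ψ q i) : ∀ i, i ≤ n → fmin p (vtx n i) = fmin q (vtx n i) := by
  intro i
  induction i with
  | zero =>
    intro _
    have h0 : vtx n 0 = (0 : Fin (n+1)) := Fin.ext (by rw [vtx_val (Nat.zero_le n)]; rfl)
    rw [h0, fmin_zero hp, fmin_zero hq]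
  | succ i ih =>
    intro hi
    have hIH := ih (by omega)
    have hs : stepSym (fmin p (vtx n (i+1)) - fmin p (vtx n i))
        = stepSym (fmin q (vtx n (i+1)) - fmin q (vtx n i)) :=
      congrArg Prod.snd (hps i (by omega))
    have heq := stepSym_inj (step_abs i (by omega)) (step_abs i (by omega)) hs
    omega

lemma main_aux (n : ℕ) (hn : 1 ≤ n) (j : ℤ) :
    (pathProtos n j).Finite ∧
    ((pathProtos n j).ncard : ℝ) ≤ 3 * 4.383 ^ (n - 1) := by
  classical
  set T : Finset (List Sym) :=
    Finset.univ.biUnion (fun t : Sym => if endOK t then F (n-1) t else ∅) with hT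
  have hmaps : ∀ p ∈ pathProtos n j, Φ p ∈ T := by
    intro p hp
    have h1 : Φ p ∈ F (n-1) (ψ p (n-1)) := by
      have hm := mem_F (ψ p) (n-1) (hstart hp hn) (fun i hi => htrans hp i (by omega))
      have hne : n - 1 + 1 = n := by omega
      rw [hne] at hm
      exact hm
    exact Finset.mem_biUnion.mpr ⟨ψ p (n-1), Finset.mem_univ _,
      by rw [if_pos (hend hp hn)]; exact h1⟩
  have hinj : Set.InjOn Φ (pathProtos n j) := by
    intro p hp q hq hPhi
    have hps : ∀ i, i < n → ψ p i = ψ q i := by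
      intro i hi
      exact List.map_inj_left.mp hPhi i (by simp [hi])
    have hA : p.1 = q.1 := by
      ext v
      by_cases hv0 : v = (0 : Fin (n+1))
      · subst hv0
        simp [hp.2.1, hq.2.1]
      · have hvval : v.val ≠ 0 := fun h => hv0 (Fin.ext (by simpa using h))
        have hvlt := v.isLt
        have hvv : vtx n ((v.val - 1) + 1) = v := Fin.ext (by rw [vtx_val (by omega)]; omega)
        have h2 : decide (vtx n ((v.val-1)+1) ∈ p.1) = decide (vtx n ((v.val-1)+1) ∈ q.1) :=
          congrArg Prod.fst (hps (v.val - 1) (by omega))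
        rw [hvv] at h2
        exact decide_eq_decide.mp h2
    have hfm := fmin_all_eq hp hq hps
    have hg : p.2 = q.2 := by
      funext v
      have hvlt := v.isLt
      by_cases hvS : v ∈ insert (0 : Fin (n+1)) p.1
      · have hvv : vtx n v.val = v := Fin.ext (vtx_val (by omega : v.val ≤ n))
        calc p.2 v = fmin p v := (fmin_agree hp v hvS).symm
          _ = fmin q v := by rw [← hvv]; exact hfm v.val (by omega)
          _ = q.2 v := fmin_agree hq v (by rwa [← hA])
      · rw [hp.1 v hvS, hq.1 v (by rwa [hA] at hvS)]
    exact Prod.ext hA hg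
  have himg : Φ '' pathProtos n j ⊆ ↑T := by
    rintro x ⟨p, hp, rfl⟩; exact hmaps p hp
  constructor
  · exact Set.Finite.of_finite_image (Set.Finite.subset T.finite_toSet himg) hinj
  · have h1 : (pathProtos n j).ncard = (Φ '' pathProtos n j).ncard :=
      (Set.ncard_image_of_injOn hinj).symm
    have h2 : (Φ '' pathProtos n j).ncard ≤ T.card := by
      rw [← Set.ncard_coe_finset]
      exact Set.ncard_le_ncard himg T.finite_toSet
    have h3 : T.card ≤ totalCnt (n-1) := by
      refine le_trans Finset.card_biUnion_le ?_
      unfold totalCnt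
      refine Finset.sum_le_sum fun t _ => ?_
      by_cases h : endOK t
      · rw [if_pos h, if_pos h]; exact card_F_le_cnt _ t
      · rw [if_neg h, if_neg h]; simp
    have h4 : (pathProtos n j).ncard ≤ totalCnt (n-1) := by
      rw [h1]; exact le_trans h2 h3
    calc ((pathProtos n j).ncard : ℝ) ≤ (totalCnt (n-1) : ℝ) := by exact_mod_cast h4
      _ ≤ 3 * 4.383 ^ (n-1) := totalBound n hn

end PathProtoAux

/-- on the path with vertices `v_0, …, v_n` (`n ≥ 1`), the number of such
pairs `(A, g)` with `v_0 ∉ A` and `g(v_0) = j` is at most `3 · 4.383^{n-1}`. -/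
theorem path_proto_count (n : ℕ) (hn : 1 ≤ n) (j : ℤ) :
    (pathProtos n j).Finite ∧
    ((pathProtos n j).ncard : ℝ) ≤ 3 * 4.383 ^ (n - 1) :=
  PathProtoAux.main_aux n hn j
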